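/- For any resumptions r, r' and r*, if r ⇓ r' and r* ⇑, then r and r* are not weakly bisimilar: ¬(r ≈ r*). In particular, ⊥ (the resumption satisfying ⊥ = δ ⊥) is not weakly bisimilar to ret σ for any state σ. -/

import Mathlib

/-! Core definitions: delayful resumptions as an M-type, strong bisimilarity,
convergence, divergence, responsiveness, committedness, weak bisimilarities. -/

abbrev state := String → ℤ

/-- Shapes of the polynomial functor for delayful resumptions. -/
inductive RShape where
  | ret (σ : state)
  | inp
  | out (v : ℤ)
  | delay

/-- The polynomial functor X ↦ state ⊕ (ℤ → X) ⊕ (ℤ × X) ⊕ X. -/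
def ResPF : PFunctor :=
  ⟨RShape, fun s => match s with
    | .ret _ => PEmpty
    | .inp => ℤ
    | .out _ => PUnit
    | .delay => PUnit⟩

/-- Delayful resumptions: the final coalgebra (M-type) of `ResPF`. -/
def Res : Type := ResPF.M

namespace Res

def ret (σ : state) : Res := PFunctor.M.mk ⟨RShape.ret σ, PEmpty.elim⟩

def inp (f : ℤ → Res) : Res := PFunctor.M.mk ⟨RShape.inp, f⟩

def out (v : ℤ) (r : Res) : Res := PFunctor.M.mk ⟨RShape.out v, fun _ => r⟩

def delay (r : Res) : Res := PFunctor.M.mk ⟨RShape.delay, fun _ => r⟩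

/-- The silently diverging resumption ⊥, satisfying ⊥ = δ ⊥. -/
def bot : Res := PFunctor.M.corec (fun _ : Unit => ⟨RShape.delay, fun _ => ()⟩) ()

end Res

/-- One step of strong bisimilarity. -/
def BisimF (R : Res → Res → Prop) (r r₁ : Res) : Prop :=
  (∃ σ, r = Res.ret σ ∧ r₁ = Res.ret σ) ∨
  (∃ f f₁, r = Res.inp f ∧ r₁ = Res.inp f₁ ∧ ∀ v, R (f v) (f₁ v)) ∨
  (∃ v a a₁, r = Res.out v a ∧ r₁ = Res.out v a₁ ∧ R a a₁) ∨
  (∃ a a₁, r = Res.delay a ∧ r₁ = Res.delay a₁ ∧ R a a₁)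

/-- Strong bisimilarity ≅: the greatest relation closed under `BisimF`. -/
def Bisim (r r₁ : Res) : Prop :=
  ∃ R : Res → Res → Prop, (∀ x y, R x y → BisimF R x y) ∧ R r r₁

/-- Convergence r ⇓ r': r converges in finitely many delay steps to a
resumption that has terminated or performs an observable action. -/
inductive Conv : Res → Res → Prop where
  | ret (σ : state) : Conv (Res.ret σ) (Res.ret σ)
  | inp {f f₁ : ℤ → Res} : (∀ v, Bisim (f v) (f₁ v)) → Conv (Res.inp f) (Res.inp f₁)
  | out {v : ℤ} {r r₁ : Res} : Bisim r r₁ → Conv (Res.out v r) (Res.out v r₁)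
  | delay {r r' : Res} : Conv r r' → Conv (Res.delay r) r'

/-- Divergence r ⇑: r silently diverges (greatest predicate with δ r ⇑ whenever r ⇑). -/
def Diverge (r : Res) : Prop :=
  ∃ P : Res → Prop, (∀ x, P x → ∃ x', x = Res.delay x' ∧ P x') ∧ P r

/-- One step of responsiveness. -/
def RespF (P : Res → Prop) (r : Res) : Prop :=
  (∃ σ, Conv r (Res.ret σ)) ∨
  (∃ f, Conv r (Res.inp f) ∧ ∀ v, P (f v)) ∨
  (∃ v r', Conv r (Res.out v r') ∧ P r')

/-- Responsiveness ↓↓ r: the greatest predicate closed under `RespF`. -/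
def Resp (r : Res) : Prop :=
  ∃ P : Res → Prop, (∀ x, P x → RespF P x) ∧ P r

/-- One step of committedness: responsiveness with a divergence option. -/
def CommF (P : Res → Prop) (r : Res) : Prop :=
  (∃ σ, Conv r (Res.ret σ)) ∨
  (∃ f, Conv r (Res.inp f) ∧ ∀ v, P (f v)) ∨
  (∃ v r', Conv r (Res.out v r') ∧ P r') ∨
  Diverge r

/-- Committedness ⇕ r: the greatest predicate closed under `CommF`. -/
def Comm (r : Res) : Prop :=
  ∃ P : Res → Prop, (∀ x, P x → CommF P x) ∧ P r

/-- One step of (termination-sensitive) weak bisimilarity. -/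
def WBisimF (R : Res → Res → Prop) (r r₁ : Res) : Prop :=
  (∃ σ, Conv r (Res.ret σ) ∧ Conv r₁ (Res.ret σ)) ∨
  (∃ f f₁, Conv r (Res.inp f) ∧ Conv r₁ (Res.inp f₁) ∧ ∀ v, R (f v) (f₁ v)) ∨
  (∃ v a a₁, Conv r (Res.out v a) ∧ Conv r₁ (Res.out v a₁) ∧ R a a₁) ∨
  (∃ a a₁, r = Res.delay a ∧ r₁ = Res.delay a₁ ∧ R a a₁)

/-- Weak bisimilarity ≈: the greatest relation closed under `WBisimF`. -/
def WBisim (r r₁ : Res) : Prop :=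
  ∃ R : Res → Res → Prop, (∀ x y, R x y → WBisimF R x y) ∧ R r r₁

/-- The inductive part ≈↓(X) of the second formulation of weak bisimilarity. -/
inductive WBisimI (X : Res → Res → Prop) : Res → Res → Prop where
  | ret (σ : state) : WBisimI X (Res.ret σ) (Res.ret σ)
  | out {v r r₁} : X r r₁ → WBisimI X (Res.out v r) (Res.out v r₁)
  | inp {f f₁} : (∀ v, X (f v) (f₁ v)) → WBisimI X (Res.inp f) (Res.inp f₁)
  | delayL {r r₁} : WBisimI X r r₁ → WBisimI X (Res.delay r) r₁
  | delayR {r r₁} : WBisimI X r r₁ → WBisimI X r (Res.delay r₁)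

/-- One step of the second (Mendler-style) formulation ≈° of weak bisimilarity. -/
def WBisimOF (R : Res → Res → Prop) (r r₁ : Res) : Prop :=
  (∃ X : Res → Res → Prop, (∀ x y, X x y → R x y) ∧ WBisimI X r r₁) ∨
  (∃ a a₁, r = Res.delay a ∧ r₁ = Res.delay a₁ ∧ R a a₁)

/-- The second formulation ≈° of weak bisimilarity (induction nested into coinduction). -/
def WBisimO (r r₁ : Res) : Prop :=
  ∃ R : Res → Res → Prop, (∀ x y, R x y → WBisimOF R x y) ∧ R r r₁

/-- One step of classical-style weak bisimilarity. -/
def WBisimClF (R : Res → Res → Prop) (r r₁ : Res) : Prop :=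
  (∃ σ, Conv r (Res.ret σ) ∧ Conv r₁ (Res.ret σ)) ∨
  (∃ v a a₁, Conv r (Res.out v a) ∧ Conv r₁ (Res.out v a₁) ∧ R a a₁) ∨
  (∃ f f₁, Conv r (Res.inp f) ∧ Conv r₁ (Res.inp f₁) ∧ ∀ v, R (f v) (f₁ v)) ∨
  (Diverge r ∧ Diverge r₁)

/-- Classical-style weak bisimilarity ≈c. -/
def WBisimCl (r r₁ : Res) : Prop :=
  ∃ R : Res → Res → Prop, (∀ x y, R x y → WBisimClF R x y) ∧ R r r₁

lemma mk_inj {a b : ResPF.Obj Res} (h : PFunctor.M.mk a = PFunctor.M.mk b) : a = b := by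
  have := congrArg PFunctor.M.dest h
  exact (PFunctor.M.dest_mk a).symm.trans (this.trans (PFunctor.M.dest_mk b))

lemma shape_eq {a b : ResPF.Obj Res} (h : PFunctor.M.mk a = PFunctor.M.mk b) :
    a.1 = b.1 := congrArg Sigma.fst (mk_inj h)

lemma delay_inj {a b : Res} (h : Res.delay a = Res.delay b) : a = b := by
  have := mk_inj h
  injection this with h1 h2
  exact congrFun h2 PUnit.unit

lemma ret_ne_delay {σ : state} {a : Res} : Res.ret σ ≠ Res.delay a := by
  intro h; exact absurd (shape_eq h) (by simp)

lemma inp_ne_delay {f : ℤ → Res} {a : Res} : Res.inp f ≠ Res.delay a := by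
  intro h; exact absurd (shape_eq h) (by simp)

lemma out_ne_delay {v : ℤ} {r a : Res} : Res.out v r ≠ Res.delay a := by
  intro h; exact absurd (shape_eq h) (by simp)

lemma diverge_delay {a : Res} (h : Diverge (Res.delay a)) : Diverge a := by
  obtain ⟨P, hP, hPa⟩ := h
  obtain ⟨x', hx, hPx⟩ := hP _ hPa
  exact ⟨P, hP, by rwa [delay_inj hx]⟩

lemma conv_not_diverge {r r' : Res} (h : Conv r r') : ¬ Diverge r := by
  induction h with
  | ret σ => rintro ⟨P, hP, hPr⟩; obtain ⟨x', hx, -⟩ := hP _ hPr; exact ret_ne_delay hx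
  | inp _ => rintro ⟨P, hP, hPr⟩; obtain ⟨x', hx, -⟩ := hP _ hPr; exact inp_ne_delay hx
  | out _ => rintro ⟨P, hP, hPr⟩; obtain ⟨x', hx, -⟩ := hP _ hPr; exact out_ne_delay hx
  | delay _ ih => intro hd; exact ih (diverge_delay hd)

lemma bot_eq : Res.bot = Res.delay Res.bot := by
  have h : PFunctor.M.dest Res.bot = ⟨RShape.delay, fun _ => Res.bot⟩ := by
    exact PFunctor.M.dest_corec _ _
  conv_lhs => rw [← PFunctor.M.mk_dest Res.bot]
  rw [h]; rfl

lemma diverge_bot : Diverge Res.bot :=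
  ⟨fun x => x = Res.bot, by rintro x rfl; exact ⟨Res.bot, bot_eq, rfl⟩, rfl⟩

lemma conv_diverge_not_wbisim_aux {r r' : Res} (h : Conv r r') :
    ∀ rs : Res, Diverge rs → ¬ WBisim r rs := by
  induction h with
  | ret σ =>
    rintro rs hd ⟨R, hR, hr⟩
    rcases hR _ _ hr with ⟨_, _, hc⟩ | ⟨_, _, _, hc, _⟩ | ⟨_, _, _, _, hc, _⟩ |
      ⟨a, a₁, heq, -, -⟩
    · exact conv_not_diverge hc hd
    · exact conv_not_diverge hc hd
    · exact conv_not_diverge hc hd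
    · exact ret_ne_delay heq
  | inp _ =>
    rintro rs hd ⟨R, hR, hr⟩
    rcases hR _ _ hr with ⟨_, _, hc⟩ | ⟨_, _, _, hc, _⟩ | ⟨_, _, _, _, hc, _⟩ |
      ⟨a, a₁, heq, -, -⟩
    · exact conv_not_diverge hc hd
    · exact conv_not_diverge hc hd
    · exact conv_not_diverge hc hd
    · exact inp_ne_delay heq
  | out _ =>
    rintro rs hd ⟨R, hR, hr⟩
    rcases hR _ _ hr with ⟨_, _, hc⟩ | ⟨_, _, _, hc, _⟩ | ⟨_, _, _, _, hc, _⟩ |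
      ⟨a, a₁, heq, -, -⟩
    · exact conv_not_diverge hc hd
    · exact conv_not_diverge hc hd
    · exact conv_not_diverge hc hd
    · exact out_ne_delay heq
  | delay _ ih =>
    rintro rs hd ⟨R, hR, hr⟩
    rcases hR _ _ hr with ⟨_, _, hc⟩ | ⟨_, _, _, hc, _⟩ | ⟨_, _, _, _, hc, _⟩ |
      ⟨a, a₁, heq, heq₁, hRa⟩
    · exact conv_not_diverge hc hd
    · exact conv_not_diverge hc hd
    · exact conv_not_diverge hc hd
    · subst heq₁
      rw [← delay_inj heq] at hRa
      exact ih a₁ (diverge_delay hd) ⟨R, hR, hRa⟩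

/-- If r ⇓ r' and r* ⇑ then ¬(r ≈ r*); in particular ⊥ (which
satisfies ⊥ = δ ⊥) is not weakly bisimilar to ret σ for any state σ. -/
theorem conv_diverge_not_wbisim :
    (∀ r r' rs : Res, Conv r r' → Diverge rs → ¬ WBisim r rs) ∧
    (∀ σ : state, ¬ WBisim Res.bot (Res.ret σ)) := by
  refine ⟨fun r r' rs h hd => conv_diverge_not_wbisim_aux h rs hd, fun σ => ?_⟩
  rintro ⟨R, hR, hr⟩
  rcases hR _ _ hr with ⟨_, hc, _⟩ | ⟨_, _, hc, _⟩ | ⟨_, _, _, hc, _⟩ |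
    ⟨a, a₁, -, heq₁, -⟩
  · exact conv_not_diverge hc diverge_bot
  · exact conv_not_diverge hc diverge_bot
  · exact conv_not_diverge hc diverge_bot
  · exact ret_ne_delay heq₁
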